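/- arXiv:2009.08032 — 2 statements merged into one kernel-verified Lean document; each statement's English description precedes it below -/
import Mathlib

section
/- Let s_1,…,s_ℓ and t_1,…,t_ℓ be reals with t_i > 0, Σ t_i = m, and Σ s_i ≥ (1/2+ε)m. Then Σ_{i=1}^ℓ (2s_i − t_i)²/√t_i ≥ 4ε² m^{3/2}/√ℓ. -/
/-- If `t_i > 0`, `Σ t_i = m`, and `Σ s_i ≥ (1/2 + ε) m`, then
`Σ (2 s_i − t_i)² / √t_i ≥ 4 ε² m^{3/2} / √ℓ`. -/
theorem sum_sq_div_sqrt_lower_bound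
    (ℓ : ℕ) (hℓ : 0 < ℓ) (s t : Fin ℓ → ℝ) (m ε : ℝ)
    (hm : 0 < m) (hε : 0 ≤ ε)
    (ht : ∀ i, 0 < t i) (htm : ∑ i, t i = m)
    (hs : (1/2 + ε) * m ≤ ∑ i, s i) :
    4 * ε ^ 2 * m ^ ((3 : ℝ) / 2) / Real.sqrt ℓ ≤
      ∑ i, (2 * s i - t i) ^ 2 / Real.sqrt (t i) := by
  set T : ℝ := ∑ i, (2 * s i - t i) with hT
  set U : ℝ := ∑ i, Real.sqrt (t i) with hU
  have hU_pos : 0 < U := Finset.sum_pos (fun i _ => Real.sqrt_pos.2 (ht i)) ⟨⟨0, hℓ⟩, Finset.mem_univ _⟩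
  -- Sedrakyan: T² / U ≤ RHS
  have sedr : T ^ 2 / U ≤ ∑ i, (2 * s i - t i) ^ 2 / Real.sqrt (t i) :=
    Finset.sq_sum_div_le_sum_sq_div _ _ (fun i _ => Real.sqrt_pos.2 (ht i))
  -- T ≥ 2 ε m
  have hT_ge : 2 * ε * m ≤ T := by
    have : T = 2 * (∑ i, s i) - m := by
      rw [hT, Finset.sum_sub_distrib, htm, ← Finset.mul_sum]
    rw [this]
    nlinarith [hs]
  have hT_nonneg : 0 ≤ 2 * ε * m := by positivity
  -- U ≤ √ℓ * √m
  have hU_le : U ≤ Real.sqrt ℓ * Real.sqrt m := by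
    have h1 : U ^ 2 ≤ (ℓ : ℝ) * m := by
      have := Finset.sum_mul_sq_le_sq_mul_sq Finset.univ (fun _ : Fin ℓ => (1 : ℝ))
        (fun i => Real.sqrt (t i))
      simp only [one_mul, one_pow, Finset.sum_const, Finset.card_univ, Fintype.card_fin,
        nsmul_eq_mul, mul_one] at this
      calc U ^ 2 ≤ (ℓ : ℝ) * ∑ i, Real.sqrt (t i) ^ 2 := this
        _ = (ℓ : ℝ) * m := by
            rw [← htm]; congr 1; exact Finset.sum_congr rfl fun i _ =>
              Real.sq_sqrt (ht i).le
    calc U = Real.sqrt (U ^ 2) := (Real.sqrt_sq hU_pos.le).symm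
      _ ≤ Real.sqrt ((ℓ : ℝ) * m) := Real.sqrt_le_sqrt h1
      _ = Real.sqrt ℓ * Real.sqrt m := Real.sqrt_mul (Nat.cast_nonneg _) _
  have hℓ_pos : (0 : ℝ) < Real.sqrt ℓ := Real.sqrt_pos.2 (by exact_mod_cast hℓ)
  have hm_sqrt : (0 : ℝ) < Real.sqrt m := Real.sqrt_pos.2 hm
  -- m^{3/2} = m² / √m
  have hpow : m ^ ((3 : ℝ) / 2) = m ^ 2 / Real.sqrt m := by
    rw [Real.sqrt_eq_rpow, ← Real.rpow_natCast m 2, ← Real.rpow_sub hm]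
    norm_num
  have key : 4 * ε ^ 2 * m ^ ((3 : ℝ) / 2) / Real.sqrt ℓ ≤ T ^ 2 / U := by
    rw [hpow]
    have h2 : (2 * ε * m) ^ 2 ≤ T ^ 2 := by nlinarith
    have h3 : (2 * ε * m) ^ 2 / (Real.sqrt ℓ * Real.sqrt m) ≤ T ^ 2 / U := by
      apply div_le_div₀ (sq_nonneg T) h2 hU_pos hU_le
    calc 4 * ε ^ 2 * (m ^ 2 / Real.sqrt m) / Real.sqrt ℓ
        = (2 * ε * m) ^ 2 / (Real.sqrt ℓ * Real.sqrt m) := by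
          field_simp; ring
      _ ≤ T ^ 2 / U := h3
  linarith
end

section
/- Let φ be a k-XOR instance with odd k, and let ψ be the partitioned 2-XOR instance obtained by splitting each constraint e ∈ E into a vertex i and two disjoint (k−1)/2-sets e_1, e_2 with i ∪ e_1 ∪ e_2 = e, placing constraint (e_1,e_2) in part i with sign r'_i(e_1,e_2) = r(e). Then val_ψ ≥ val_φ. -/
open Finset

/-- Boolean (±1) assignments on an index type. -/
def BoolFun (ι : Type*) : Type _ := {x : ι → ℝ // ∀ i, x i = 1 ∨ x i = -1}

instance (ι : Type*) : Nonempty (BoolFun ι) := ⟨⟨fun _ => 1, fun _ => Or.inl rfl⟩⟩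

/-- Let `φ` be a `k`-XOR instance with odd `k` (constraints `e c` of size `k`, signs
`r c = ±1`), and let `ψ` be the partitioned 2-XOR instance obtained by splitting each
constraint into a vertex `i c` and two disjoint `(k−1)/2`-sets `e₁ c, e₂ c` whose
union with `i c` is `e c`, with the sign carried over.  Then `val_ψ ≥ val_φ`. -/
theorem odd_kxor_to_partitioned_2xor
    (k n m : ℕ) (hk : Odd k) (hm : 0 < m)
    (e : Fin m → Finset (Fin n)) (he : ∀ c, (e c).card = k)
    (r : Fin m → ℝ) (hr : ∀ c, r c = 1 ∨ r c = -1)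
    (i : Fin m → Fin n) (e₁ e₂ : Fin m → Finset (Fin n))
    (hi₁ : ∀ c, i c ∉ e₁ c) (hi₂ : ∀ c, i c ∉ e₂ c)
    (hdisj : ∀ c, Disjoint (e₁ c) (e₂ c))
    (hcard₁ : ∀ c, (e₁ c).card = (k - 1) / 2)
    (hcard₂ : ∀ c, (e₂ c).card = (k - 1) / 2)
    (hunion : ∀ c, insert (i c) (e₁ c ∪ e₂ c) = e c) :
    (⨆ x : BoolFun (Fin n),
        ((univ.filter fun c => (∏ w ∈ e c, x.1 w) * r c = 1).card : ℝ) / m) ≤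
      ⨆ p : BoolFun (Finset (Fin n)) × BoolFun (Fin n),
        ((univ.filter fun c =>
            p.1.1 (e₁ c) * p.1.1 (e₂ c) * p.2.1 (i c) * r c = 1).card : ℝ) / m := by
  have hbdd : BddAbove (Set.range fun p : BoolFun (Finset (Fin n)) × BoolFun (Fin n) =>
      ((univ.filter fun c =>
          p.1.1 (e₁ c) * p.1.1 (e₂ c) * p.2.1 (i c) * r c = 1).card : ℝ) / m) := by
    refine ⟨(m : ℝ) / m, ?_⟩
    rintro _ ⟨p, rfl⟩
    apply div_le_div_of_nonneg_right _ (by positivity)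
    · exact_mod_cast (card_filter_le _ _).trans_eq (by simp)
  refine ciSup_le fun x => ?_
  -- construct the product assignment
  have hprodpm : ∀ S : Finset (Fin n), (∏ w ∈ S, x.1 w) = 1 ∨ (∏ w ∈ S, x.1 w) = -1 := by
    intro S
    induction S using Finset.induction with
    | empty => simp
    | @insert a s h ih =>
      rw [Finset.prod_insert h]
      rcases x.2 a with h1 | h1 <;> rcases ih with h2 | h2 <;> simp [h1, h2]
  set p : BoolFun (Finset (Fin n)) × BoolFun (Fin n) :=
    (⟨fun S => ∏ w ∈ S, x.1 w, hprodpm⟩, x) with hp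
  refine le_ciSup_of_le hbdd p (le_of_eq ?_)
  congr 1
  norm_cast
  congr 1
  apply Finset.filter_congr
  intro c _
  have hnotmem : i c ∉ e₁ c ∪ e₂ c := by
    simp [hi₁ c, hi₂ c]
  have : (∏ w ∈ e c, x.1 w) =
      (∏ w ∈ e₁ c, x.1 w) * (∏ w ∈ e₂ c, x.1 w) * x.1 (i c) := by
    rw [← hunion c, Finset.prod_insert hnotmem, Finset.prod_union (hdisj c)]
    ring
  simp only [hp, this]
end
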